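/- Let θ ∼ PN₂(B, G) with B = Xᵀβ (depending on covariates with at least two distinct covariate values in general position) and G = I₂ + S_b where S_b is a positive semidefinite 2×2 matrix. If the generalized variance constraint |S_b| = 1 is imposed, then the map (β, S_b) ↦ distribution of θ is injective up to the scaling non-identifiability: no two distinct pairs (B, G) and (cB, c²G) with c ≠ 1 can both satisfy |G − I₂| = 1. -/

import Mathlib

open Matrix

/-- Identifiability under the generalized-variance constraint: if `G = I₂ + S_b` with
`S_b` positive semidefinite and nonzero, `|G − I₂| = 1`, and the rescaled matrix `c²G`
(`c > 0`) also satisfies `|c²G − I₂| = 1`, then `c = 1`; hence no two distinct pairs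
`(B, G)` and `(cB, c²G)` with `c ≠ 1` can both satisfy the constraint. -/
theorem generalized_variance_identifiability (Sb : Matrix (Fin 2) (Fin 2) ℝ)
    (hSb : Sb.PosSemidef) (hSb0 : Sb ≠ 0) (c : ℝ) (hc : 0 < c)
    (h₁ : ((1 + Sb : Matrix (Fin 2) (Fin 2) ℝ) - 1).det = 1)
    (h₂ : (c ^ 2 • (1 + Sb : Matrix (Fin 2) (Fin 2) ℝ) - 1).det = 1) :
    c = 1 := by
  have ha : 0 ≤ Sb 0 0 := by
    exact hSb.diag_nonneg
  have hd : 0 ≤ Sb 1 1 := by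
    exact hSb.diag_nonneg
  simp only [Matrix.det_fin_two, Matrix.sub_apply, Matrix.add_apply, Matrix.smul_apply,
    Matrix.one_apply, smul_eq_mul] at h₁ h₂
  norm_num at h₁ h₂
  have h1 : (0:ℝ) < c ^ 2 := by positivity
  have key : (c ^ 2 * (c ^ 2 - 1)) * (2 + Sb 0 0 + Sb 1 1) = 0 := by linear_combination h₂ - c ^ 4 * h₁
  have h3 : (0:ℝ) < 2 + Sb 0 0 + Sb 1 1 := by linarith
  have h4 : c ^ 2 * (c ^ 2 - 1) = 0 := by
    rcases mul_eq_zero.mp key with h | h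
    · exact h
    · linarith
  have h5 : c ^ 2 = 1 := by
    rcases mul_eq_zero.mp h4 with h | h
    · nlinarith
    · linarith
  nlinarith [h5]
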